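/- Let a ∈ ℂ \ {0}, b, c ∈ ℂ and f := a·X² + b·X + c ∈ ℂ[X]. A pair (P,Q) of nonzero polynomials is a coprime Wronskian pair for f if and only if there exists a matrix Λ ∈ SL(2,ℂ) with P = Λ₁₁·P₀ + Λ₁₂·Q₀ and Q = Λ₂₁·P₀ + Λ₂₂·Q₀, where (P₀,Q₀) is one of the following: (i) P₀ = (a/3)·X³ + (b/2)·X² + c·X and Q₀ = 1 (for arbitrary a ≠ 0, b, c); or (ii) c ≠ b²/(4a) and P₀ = X² − c/a, Q₀ = a·X + b/2. -/

import Mathlib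

open Polynomial

/-- The Wronskian W(P,Q) = P'·Q − P·Q'. -/
noncomputable def Wr (P Q : Polynomial ℂ) : Polynomial ℂ :=
  P.derivative * Q - P * Q.derivative

namespace Stmt11Aux

/-- The classification predicate: (P,Q) is an SL₂-transform of a model pair. -/
def Good (a b c : ℂ) (P Q : Polynomial ℂ) : Prop :=
  ∃ Λ : Matrix (Fin 2) (Fin 2) ℂ, Λ.det = 1 ∧
    ∃ P₀ Q₀ : Polynomial ℂ,
      ((P₀ = Polynomial.C (a / 3) * Polynomial.X ^ 3 +
          Polynomial.C (b / 2) * Polynomial.X ^ 2 + Polynomial.C c * Polynomial.X ∧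
        Q₀ = 1) ∨
       (c ≠ b ^ 2 / (4 * a) ∧
        P₀ = Polynomial.X ^ 2 - Polynomial.C (c / a) ∧
        Q₀ = Polynomial.C a * Polynomial.X + Polynomial.C (b / 2))) ∧
      P = Polynomial.C (Λ 0 0) * P₀ + Polynomial.C (Λ 0 1) * Q₀ ∧
      Q = Polynomial.C (Λ 1 0) * P₀ + Polynomial.C (Λ 1 1) * Q₀

lemma wr_lin (u v w x : ℂ) (P Q : Polynomial ℂ) :
    Wr (C u * P + C v * Q) (C w * P + C x * Q) = C (u * x - v * w) * Wr P Q := by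
  simp only [Wr, derivative_add, derivative_C_mul, C_sub, C_mul]
  ring

lemma good_transport {a b c : ℂ} (u v w x : ℂ) (hdet : u * x - v * w = 1)
    {P₁ Q₁ P Q : Polynomial ℂ}
    (hP : P = C u * P₁ + C v * Q₁) (hQ : Q = C w * P₁ + C x * Q₁)
    (hG : Good a b c P₁ Q₁) : Good a b c P Q := by
  obtain ⟨Λ, hΛ, P₀, Q₀, hm, h1, h2⟩ := hG
  refine ⟨!![u, v; w, x] * Λ, ?_, P₀, Q₀, hm, ?_, ?_⟩
  · rw [Matrix.det_mul, hΛ, Matrix.det_fin_two_of, mul_one, hdet]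
  · have e1 : (!![u, v; w, x] * Λ) 0 0 = u * Λ 0 0 + v * Λ 1 0 := by
      simp [Matrix.mul_apply, Fin.sum_univ_two]
    have e2 : (!![u, v; w, x] * Λ) 0 1 = u * Λ 0 1 + v * Λ 1 1 := by
      simp [Matrix.mul_apply, Fin.sum_univ_two]
    rw [hP, h1, h2, e1, e2, C_add, C_add, C_mul, C_mul, C_mul, C_mul]
    ring
  · have e1 : (!![u, v; w, x] * Λ) 1 0 = w * Λ 0 0 + x * Λ 1 0 := by
      simp [Matrix.mul_apply, Fin.sum_univ_two]
    have e2 : (!![u, v; w, x] * Λ) 1 1 = w * Λ 0 1 + x * Λ 1 1 := by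
      simp [Matrix.mul_apply, Fin.sum_univ_two]
    rw [hQ, h1, h2, e1, e2, C_add, C_add, C_mul, C_mul, C_mul, C_mul]
    ring

lemma coprime_transport (u v w x : ℂ) (h : u * x - v * w = 1)
    {P Q P' Q' : Polynomial ℂ}
    (hP : P' = C u * P + C v * Q) (hQ' : Q' = C w * P + C x * Q)
    (hco : IsCoprime P Q) : IsCoprime P' Q' := by
  obtain ⟨s, t, hst⟩ := hco
  refine ⟨s * C x - t * C w, -(s * C v) + t * C u, ?_⟩
  subst hP hQ'
  have h1 : (C u * C x - C v * C w : Polynomial ℂ) = 1 := by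
    rw [← C_mul, ← C_mul, ← C_sub, h, C_1]
  linear_combination (s * P + t * Q) * h1 + hst

lemma eq_quad (R : Polynomial ℂ) (h : R.natDegree ≤ 2) :
    R = C (R.coeff 2) * X ^ 2 + C (R.coeff 1) * X + C (R.coeff 0) := by
  ext n
  simp only [coeff_add, coeff_C_mul, coeff_X_pow, coeff_X, coeff_C]
  match n with
  | 0 => simp
  | 1 => simp
  | 2 => simp
  | (k + 3) =>
    have : R.coeff (k + 3) = 0 := coeff_eq_zero_of_natDegree_lt (by omega)
    simp [this]

lemma case_constQ (a : ℂ) (ha : a ≠ 0) (b c : ℂ) {P Q : Polynomial ℂ}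
    (hQ0 : Q.natDegree = 0) (hQ : Q ≠ 0)
    (hW : Wr P Q = C a * X ^ 2 + C b * X + C c) : Good a b c P Q := by
  set q := Q.coeff 0 with hqdef
  have hq : q ≠ 0 := by
    intro h0
    apply hQ
    rw [eq_C_of_natDegree_eq_zero hQ0, ← hqdef, h0, C_0]
  have hQC : Q = C q := eq_C_of_natDegree_eq_zero hQ0
  have hW' : derivative P * C q = C a * X ^ 2 + C b * X + C c := by
    have : Wr P Q = derivative P * C q := by rw [hQC]; simp [Wr]
    rw [← this, hW]
  set P₀ : Polynomial ℂ := C (a / 3) * X ^ 3 + C (b / 2) * X ^ 2 + C c * X with hP₀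
  have hdP₀ : derivative P₀ = C a * X ^ 2 + C b * X + C c := by
    rw [hP₀]
    apply Polynomial.funext
    intro r
    simp
    ring
  have e : (C q⁻¹ * C q : Polynomial ℂ) = 1 := by
    rw [← C_mul, inv_mul_cancel₀ hq, C_1]
  have hdP : derivative P = C q⁻¹ * (C a * X ^ 2 + C b * X + C c) := by
    linear_combination C q⁻¹ * hW' - derivative P * e
  set R : Polynomial ℂ := C q⁻¹ * P₀ + C (P.coeff 0) with hR
  have hdR : derivative R = C q⁻¹ * (C a * X ^ 2 + C b * X + C c) := by
    rw [hR, derivative_add, derivative_C_mul, hdP₀, derivative_C, add_zero]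
  have hd0 : derivative (P - R) = 0 := by
    rw [derivative_sub, hdP, hdR, sub_self]
  have hPR : P - R = C ((P - R).coeff 0) :=
    eq_C_of_natDegree_eq_zero (natDegree_eq_zero_of_derivative_eq_zero hd0)
  have hR0 : R.coeff 0 = P.coeff 0 := by
    rw [hR, hP₀]
    simp
  have hPeq : P = C q⁻¹ * P₀ + C (P.coeff 0) := by
    have : (P - R).coeff 0 = 0 := by
      rw [coeff_sub, hR0, sub_self]
    have h2 : P - R = 0 := by rw [hPR, this, C_0]
    have h3 := sub_eq_zero.mp h2
    rw [hR] at h3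
    exact h3
  refine ⟨!![q⁻¹, P.coeff 0; 0, q], ?_, P₀, 1, Or.inl ⟨hP₀, rfl⟩, ?_, ?_⟩
  · rw [Matrix.det_fin_two_of]
    field_simp
    simp
  · simpa using hPeq
  · simp [hQC]

lemma case_constP (a : ℂ) (ha : a ≠ 0) (b c : ℂ) {P Q : Polynomial ℂ}
    (hP0 : P.natDegree = 0) (hP : P ≠ 0)
    (hW : Wr P Q = C a * X ^ 2 + C b * X + C c) : Good a b c P Q := by
  have h1 : Wr Q (-P) = Wr P Q := by simp only [Wr, derivative_neg]; ring
  have hG : Good a b c Q (-P) := by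
    apply case_constQ a ha b c (by simp [hP0]) (by simpa using hP)
    rw [h1, hW]
  exact good_transport 0 (-1) 1 0 (by ring) (by simp) (by simp) hG

lemma deg_sum (a : ℂ) (ha : a ≠ 0) (b c : ℂ) {P Q : Polynomial ℂ}
    (hP : P ≠ 0) (hQ : Q ≠ 0) (hm : 1 ≤ P.natDegree) (hn : 1 ≤ Q.natDegree)
    (hne : P.natDegree ≠ Q.natDegree)
    (hW : Wr P Q = C a * X ^ 2 + C b * X + C c) :
    P.natDegree + Q.natDegree = 3 := by
  have hc1 : (derivative P * Q).coeff (P.natDegree + Q.natDegree - 1)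
      = P.coeff P.natDegree * P.natDegree * Q.coeff Q.natDegree := by
    have e1 : P.natDegree + Q.natDegree - 1 = (P.natDegree - 1) + Q.natDegree := by omega
    rw [e1, coeff_mul_add_eq_of_natDegree_le (natDegree_derivative_le P) le_rfl,
      coeff_derivative]
    have e2 : P.natDegree - 1 + 1 = P.natDegree := by omega
    have e3 : ((P.natDegree - 1 : ℕ) : ℂ) = (P.natDegree : ℂ) - 1 := by
      rw [Nat.cast_sub hm, Nat.cast_one]
    rw [e2, e3]
    ring
  have hc2 : (P * derivative Q).coeff (P.natDegree + Q.natDegree - 1)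
      = P.coeff P.natDegree * (Q.coeff Q.natDegree * Q.natDegree) := by
    have e1 : P.natDegree + Q.natDegree - 1 = P.natDegree + (Q.natDegree - 1) := by omega
    rw [e1, coeff_mul_add_eq_of_natDegree_le le_rfl (natDegree_derivative_le Q),
      coeff_derivative]
    have e2 : Q.natDegree - 1 + 1 = Q.natDegree := by omega
    have e3 : ((Q.natDegree - 1 : ℕ) : ℂ) = (Q.natDegree : ℂ) - 1 := by
      rw [Nat.cast_sub hn, Nat.cast_one]
    rw [e2, e3]
    ring
  have hcoeff : (Wr P Q).coeff (P.natDegree + Q.natDegree - 1)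
      = P.coeff P.natDegree * Q.coeff Q.natDegree
        * ((P.natDegree : ℂ) - Q.natDegree) := by
    rw [Wr, coeff_sub, hc1, hc2]; ring
  have hPm : P.coeff P.natDegree ≠ 0 := by
    rw [← leadingCoeff]; exact leadingCoeff_ne_zero.mpr hP
  have hQn : Q.coeff Q.natDegree ≠ 0 := by
    rw [← leadingCoeff]; exact leadingCoeff_ne_zero.mpr hQ
  have hmn : (P.natDegree : ℂ) - Q.natDegree ≠ 0 := by
    intro h0
    exact hne (Nat.cast_injective (sub_eq_zero.mp h0))
  have hne0 : (Wr P Q).coeff (P.natDegree + Q.natDegree - 1) ≠ 0 := by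
    rw [hcoeff]
    exact mul_ne_zero (mul_ne_zero hPm hQn) hmn
  have hWdeg : (Wr P Q).natDegree = 2 := by
    rw [hW]; exact natDegree_quadratic ha
  have hle : P.natDegree + Q.natDegree - 1 ≤ 2 := by
    rw [← hWdeg]
    exact le_natDegree_of_ne_zero hne0
  have hge : (Wr P Q).natDegree ≤ P.natDegree + Q.natDegree - 1 := by
    apply le_trans (natDegree_sub_le _ _)
    apply max_le
    · exact le_trans natDegree_mul_le
        (by have := natDegree_derivative_le P; omega)
    · exact le_trans natDegree_mul_le
        (by have := natDegree_derivative_le Q; omega)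
  omega

lemma case21 (a : ℂ) (ha : a ≠ 0) (b c : ℂ) {P Q : Polynomial ℂ}
    (hP2 : P.natDegree = 2) (hQ1 : Q.natDegree = 1)
    (hW : Wr P Q = C a * X ^ 2 + C b * X + C c)
    (hco : IsCoprime P Q) : Good a b c P Q := by
  have hPne : P ≠ 0 := fun h => by simp [h] at hP2
  have hQne : Q ≠ 0 := fun h => by simp [h] at hQ1
  set α := P.coeff 2 with hαd
  set β := P.coeff 1 with hβd
  set γ := P.coeff 0 with hγd
  set δ := Q.coeff 1 with hδd
  set ε := Q.coeff 0 with hεd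
  have hα : α ≠ 0 := by
    rw [hαd, ← hP2, ← leadingCoeff]; exact leadingCoeff_ne_zero.mpr hPne
  have hδ : δ ≠ 0 := by
    rw [hδd, ← hQ1, ← leadingCoeff]; exact leadingCoeff_ne_zero.mpr hQne
  have hPe : P = C α * X ^ 2 + C β * X + C γ := eq_quad P (le_of_eq hP2)
  have hQ2 : Q.coeff 2 = 0 := coeff_eq_zero_of_natDegree_lt (by omega)
  have hQe : Q = C δ * X + C ε := by
    have := eq_quad Q (by omega)
    rw [hQ2] at this
    simpa using this
  have hWe : Wr P Q = C (α * δ) * X ^ 2 + C (2 * α * ε) * X + C (β * ε - γ * δ) := by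
    rw [hPe, hQe]
    unfold Wr
    simp only [derivative_add, derivative_C_mul, derivative_X_pow, derivative_X,
      derivative_C]
    apply Polynomial.funext
    intro r
    simp
    ring
  rw [hWe] at hW
  have e1 : α * δ = a := by
    have := congrArg (fun p => Polynomial.coeff p 2) hW
    simp only [coeff_add, coeff_C_mul, coeff_X_pow, coeff_X, coeff_C] at this
    norm_num at this
    exact this
  have e2 : 2 * α * ε = b := by
    have := congrArg (fun p => Polynomial.coeff p 1) hW
    simp only [coeff_add, coeff_C_mul, coeff_X_pow, coeff_X, coeff_C] at this
    norm_num at this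
    exact this
  have e3 : β * ε - γ * δ = c := by
    have := congrArg (fun p => Polynomial.coeff p 0) hW
    simp only [coeff_add, coeff_C_mul, coeff_X_pow, coeff_X, coeff_C] at this
    norm_num at this
    exact this
  have hc : c ≠ b ^ 2 / (4 * a) := by
    intro h
    have h' : c * (4 * a) = b ^ 2 := by
      field_simp at h
      linear_combination h
    rw [← e1, ← e2, ← e3] at h'
    have key : β * ε * δ - γ * δ ^ 2 - α * ε ^ 2 = 0 := by
      have h4 : (4 * α) * (β * ε * δ - γ * δ ^ 2 - α * ε ^ 2) = 0 := by
        linear_combination h'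
      rcases mul_eq_zero.mp h4 with h5 | h5
      · exact absurd h5 (by simp [hα])
      · exact h5
    have hp0 : eval (-ε / δ) P = 0 := by
      rw [hPe]
      simp only [eval_add, eval_mul, eval_pow, eval_C, eval_X]
      field_simp
      linear_combination (-1 : ℂ) * key
    have hq0 : eval (-ε / δ) Q = 0 := by
      rw [hQe]
      simp only [eval_add, eval_mul, eval_C, eval_X]
      field_simp
      ring
    obtain ⟨u, v, huv⟩ := hco
    have h1 := congrArg (eval (-ε / δ)) huv
    simp only [eval_add, eval_mul, eval_one, hp0, hq0, mul_zero, add_zero] at h1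
    exact one_ne_zero h1.symm
  refine ⟨!![α, β / a; 0, δ / a], ?_, X ^ 2 - C (c / a), C a * X + C (b / 2),
    Or.inr ⟨hc, rfl, rfl⟩, ?_, ?_⟩
  · rw [Matrix.det_fin_two_of]
    field_simp
    linear_combination e1
  · have m00 : (!![α, β / a; 0, δ / a] : Matrix (Fin 2) (Fin 2) ℂ) 0 0 = α := by simp
    have m01 : (!![α, β / a; 0, δ / a] : Matrix (Fin 2) (Fin 2) ℂ) 0 1 = β / a := by simp
    rw [m00, m01, hPe]
    apply Polynomial.funext
    intro r
    simp
    field_simp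
    linear_combination (-2 * γ * e1 - 2 * α * e3 + β * e2)
  · have m10 : (!![α, β / a; 0, δ / a] : Matrix (Fin 2) (Fin 2) ℂ) 1 0 = 0 := by simp
    have m11 : (!![α, β / a; 0, δ / a] : Matrix (Fin 2) (Fin 2) ℂ) 1 1 = δ / a := by simp
    rw [m10, m11, hQe]
    apply Polynomial.funext
    intro r
    simp
    field_simp
    linear_combination -2 * ε * e1 + δ * e2

lemma case12 (a : ℂ) (ha : a ≠ 0) (b c : ℂ) {P Q : Polynomial ℂ}
    (hP1 : P.natDegree = 1) (hQ2 : Q.natDegree = 2)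
    (hW : Wr P Q = C a * X ^ 2 + C b * X + C c)
    (hco : IsCoprime P Q) : Good a b c P Q := by
  have h1 : Wr Q (-P) = Wr P Q := by simp only [Wr, derivative_neg]; ring
  have hG : Good a b c Q (-P) := by
    apply case21 a ha b c hQ2 (by simp [hP1]) (by rw [h1, hW]) hco.symm.neg_right
  exact good_transport 0 (-1) 1 0 (by ring) (by simp) (by simp) hG

lemma forward (a : ℂ) (ha : a ≠ 0) (b c : ℂ) {P Q : Polynomial ℂ}
    (hP : P ≠ 0) (hQ : Q ≠ 0)
    (hW : Wr P Q = C a * X ^ 2 + C b * X + C c)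
    (hco : IsCoprime P Q) : Good a b c P Q := by
  by_cases hQ0 : Q.natDegree = 0
  · exact case_constQ a ha b c hQ0 hQ hW
  by_cases hP0 : P.natDegree = 0
  · exact case_constP a ha b c hP0 hP hW
  by_cases hne : P.natDegree = Q.natDegree
  · -- equal degrees: reduce
    set l := P.leadingCoeff * Q.leadingCoeff⁻¹ with hl
    set P' := P - C l * Q with hP'
    have hP'eq : P' = C 1 * P + C (-l) * Q := by rw [hP']; simp; ring
    have hWP' : Wr P' Q = Wr P Q := by
      rw [hP']
      simp only [Wr, derivative_sub, derivative_C_mul]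
      ring
    have hWP'2 : Wr P' Q = C a * X ^ 2 + C b * X + C c := by rw [hWP', hW]
    have hco' : IsCoprime P' Q :=
      coprime_transport 1 (-l) 0 1 (by ring) hP'eq (by simp) hco
    have hP'ne : P' ≠ 0 := by
      intro h0
      have hPl : P = C l * Q := by
        have := sub_eq_zero.mp (hP' ▸ h0)
        exact this
      rw [hPl] at hco
      have : IsUnit Q := hco.isUnit_of_dvd' (dvd_mul_left Q (C l)) dvd_rfl
      exact hQ0 (natDegree_eq_zero_of_isUnit this)
    have hlne : l ≠ 0 := by
      apply mul_ne_zero (leadingCoeff_ne_zero.mpr hP)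
      exact inv_ne_zero (leadingCoeff_ne_zero.mpr hQ)
    have hdeglt : P'.natDegree < Q.natDegree := by
      have hdeg : (C l * Q).degree = Q.degree := by
        rw [degree_C_mul hlne]
      have hlc : P.leadingCoeff = (C l * Q).leadingCoeff := by
        rw [leadingCoeff_mul, leadingCoeff_C, hl,
          inv_mul_cancel_right₀ (leadingCoeff_ne_zero.mpr hQ)]
      have hdlt : (P - C l * Q).degree < P.degree := by
        apply degree_sub_lt _ hP hlc
        rw [hdeg, degree_eq_natDegree hP, degree_eq_natDegree hQ, hne]
      have : P'.degree < Q.degree := by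
        rw [hP']
        calc (P - C l * Q).degree < P.degree := hdlt
          _ = Q.degree := by
            rw [degree_eq_natDegree hP, degree_eq_natDegree hQ, hne]
      exact natDegree_lt_natDegree hP'ne this
    have hGood' : Good a b c P' Q := by
      by_cases hP'0 : P'.natDegree = 0
      · exact case_constP a ha b c hP'0 hP'ne hWP'2
      · have hsum : P'.natDegree + Q.natDegree = 3 :=
          deg_sum a ha b c hP'ne hQ (by omega) (by omega) (by omega) hWP'2
        have h12 : P'.natDegree = 1 ∧ Q.natDegree = 2 := by omega
        exact case12 a ha b c h12.1 h12.2 hWP'2 hco'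
    refine good_transport 1 l 0 1 (by ring) ?_ (by simp) hGood'
    rw [hP']
    simp
  · have hsum : P.natDegree + Q.natDegree = 3 :=
      deg_sum a ha b c hP hQ (by omega) (by omega) hne hW
    rcases Nat.lt_or_ge P.natDegree Q.natDegree with h | h
    · have h12 : P.natDegree = 1 ∧ Q.natDegree = 2 := by omega
      exact case12 a ha b c h12.1 h12.2 hW hco
    · have h21 : P.natDegree = 2 ∧ Q.natDegree = 1 := by omega
      exact case21 a ha b c h21.1 h21.2 hW hco

lemma model_wr_i (a b c : ℂ) :
    Wr (C (a / 3) * X ^ 3 + C (b / 2) * X ^ 2 + C c * X) 1 =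
      C a * X ^ 2 + C b * X + C c := by
  unfold Wr
  simp only [derivative_one, mul_zero, sub_zero, mul_one, derivative_add,
    derivative_C_mul, derivative_X_pow, derivative_X]
  apply Polynomial.funext
  intro r
  simp
  ring

lemma model_wr_ii (a : ℂ) (ha : a ≠ 0) (b c : ℂ) :
    Wr (X ^ 2 - C (c / a)) (C a * X + C (b / 2)) = C a * X ^ 2 + C b * X + C c := by
  unfold Wr
  simp only [derivative_sub, derivative_X_pow, derivative_C, sub_zero,
    derivative_add, derivative_C_mul, derivative_X, mul_one]
  apply Polynomial.funext
  intro r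
  simp
  field_simp
  ring

lemma model_coprime_ii (a : ℂ) (ha : a ≠ 0) (b c : ℂ) (hc : c ≠ b ^ 2 / (4 * a)) :
    IsCoprime (X ^ 2 - C (c / a)) (C a * X + C (b / 2) : Polynomial ℂ) := by
  have hD : b ^ 2 - 4 * a * c ≠ 0 := by
    intro h0
    apply hc
    field_simp
    linear_combination -h0
  refine ⟨C ((4 * a ^ 2) / (b ^ 2 - 4 * a * c)),
    -(C ((4 * a ^ 2) / (b ^ 2 - 4 * a * c)) * C a⁻¹ * (X - C (b / (2 * a)))), ?_⟩
  apply Polynomial.funext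
  intro r
  simp
  have hD2 : a ^ 3 * b ^ 4 * 4 - a ^ 4 * c * b ^ 2 * 32 + a ^ 5 * c ^ 2 * 64 ≠ 0 := by
    have h1 : a ^ 3 * b ^ 4 * 4 - a ^ 4 * c * b ^ 2 * 32 + a ^ 5 * c ^ 2 * 64
        = 4 * a ^ 3 * (b ^ 2 - 4 * a * c) ^ 2 := by ring
    rw [h1]
    exact mul_ne_zero (mul_ne_zero (by norm_num) (pow_ne_zero 3 ha)) (pow_ne_zero 2 hD)
  field_simp
  have h2 : (2 : ℂ) ≠ 0 := two_ne_zero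
  have hden : ((b ^ 2 - 4 * a * c) * a * ((b ^ 2 - 4 * a * c) * a * (2 * a) * 2) : ℂ) ≠ 0 :=
    mul_ne_zero (mul_ne_zero hD ha)
      (mul_ne_zero (mul_ne_zero (mul_ne_zero hD ha) (mul_ne_zero h2 ha)) h2)
  ring

lemma backward (a : ℂ) (ha : a ≠ 0) (b c : ℂ) {P Q : Polynomial ℂ}
    (hG : Good a b c P Q) :
    P ≠ 0 ∧ Q ≠ 0 ∧ Wr P Q = C a * X ^ 2 + C b * X + C c ∧ IsCoprime P Q := by
  obtain ⟨Λ, hΛ, P₀, Q₀, hm, h1, h2⟩ := hG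
  have hdet : Λ 0 0 * Λ 1 1 - Λ 0 1 * Λ 1 0 = 1 := by
    rw [← Matrix.det_fin_two Λ, hΛ]
  have hW0 : Wr P₀ Q₀ = C a * X ^ 2 + C b * X + C c := by
    rcases hm with ⟨hp, hq⟩ | ⟨hc, hp, hq⟩
    · rw [hp, hq]; exact model_wr_i a b c
    · rw [hp, hq]; exact model_wr_ii a ha b c
  have hco0 : IsCoprime P₀ Q₀ := by
    rcases hm with ⟨hp, hq⟩ | ⟨hc, hp, hq⟩
    · rw [hq]; exact isCoprime_one_right
    · rw [hp, hq]; exact model_coprime_ii a ha b c hc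
  have hW : Wr P Q = C a * X ^ 2 + C b * X + C c := by
    rw [h1, h2, wr_lin, hdet, C_1, one_mul, hW0]
  have hfne : (C a * X ^ 2 + C b * X + C c : Polynomial ℂ) ≠ 0 := by
    intro h0
    apply ha
    have := congrArg (fun p => Polynomial.coeff p 2) h0
    simpa using this
  refine ⟨?_, ?_, hW, ?_⟩
  · intro h0
    apply hfne
    rw [← hW, h0]
    simp [Wr]
  · intro h0
    apply hfne
    rw [← hW, h0]
    simp [Wr]
  · exact coprime_transport (Λ 0 0) (Λ 0 1) (Λ 1 0) (Λ 1 1) hdet h1 h2 hco0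

end Stmt11Aux

/-- classification of coprime Wronskian pairs for a quadratic
f = a·X² + b·X + c (a ≠ 0): (P,Q) is a coprime Wronskian pair for f iff
(P,Q) = Λ(P₀,Q₀) for some Λ ∈ SL(2,ℂ), where (P₀,Q₀) is either
(i) ((a/3)X³ + (b/2)X² + cX, 1), or
(ii) (X² − c/a, aX + b/2) provided c ≠ b²/(4a). -/
theorem stmt11 (a : ℂ) (ha : a ≠ 0) (b c : ℂ) (f : Polynomial ℂ)
    (hf : f = Polynomial.C a * Polynomial.X ^ 2 + Polynomial.C b * Polynomial.X +
      Polynomial.C c)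
    (P Q : Polynomial ℂ) :
    (P ≠ 0 ∧ Q ≠ 0 ∧ Wr P Q = f ∧ IsCoprime P Q) ↔
    ∃ Λ : Matrix (Fin 2) (Fin 2) ℂ, Λ.det = 1 ∧
      ∃ P₀ Q₀ : Polynomial ℂ,
        ((P₀ = Polynomial.C (a / 3) * Polynomial.X ^ 3 +
            Polynomial.C (b / 2) * Polynomial.X ^ 2 + Polynomial.C c * Polynomial.X ∧
          Q₀ = 1) ∨
         (c ≠ b ^ 2 / (4 * a) ∧
          P₀ = Polynomial.X ^ 2 - Polynomial.C (c / a) ∧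
          Q₀ = Polynomial.C a * Polynomial.X + Polynomial.C (b / 2))) ∧
        P = Polynomial.C (Λ 0 0) * P₀ + Polynomial.C (Λ 0 1) * Q₀ ∧
        Q = Polynomial.C (Λ 1 0) * P₀ + Polynomial.C (Λ 1 1) * Q₀ := by
  subst hf
  constructor
  · rintro ⟨hP, hQ, hW, hco⟩
    exact Stmt11Aux.forward a ha b c hP hQ hW hco
  · intro hG
    exact Stmt11Aux.backward a ha b c hG
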